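/- Let f be the function f(a1,a2,b1,b2) = (I(a1+b1)I(a2+b2) - I(a1+b2)I(a2+b1)) / ((a2-a1)(b2-b1)) where I(x) = (1-e^{-x})/x. Then f admits the integral representation f(a1,a2,b1,b2) = -∫_0^1 ∫_0^1 [I'(a(u)+b_1)I'(a_2+b(v)) - I''(a(u)+b(v))I(a_2+b_1)] du dv, where a(u) = a_1 + u(a_2-a_1) and b(v) = b_1 + v(b_2-b_1). -/

import Mathlib

/-- `I(x) = (1 - e^{-x})/x`, extended by `I(0) = 1`. -/
noncomputable def Ifun : ℂ → ℂ := fun x => if x = 0 then 1 else (1 - Complex.exp (-x)) / x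

open Filter

lemma Ifun_entire : AnalyticOnNhd ℂ Ifun Set.univ := by
  have hnum : Differentiable ℂ (fun x : ℂ => 1 - Complex.exp (-x)) := by
    apply Differentiable.const_sub
    exact Complex.differentiable_exp.comp differentiable_neg
  have hdiff : ∀ z : ℂ, z ≠ 0 → DifferentiableAt ℂ Ifun z := by
    intro z hz
    have h1 : DifferentiableAt ℂ (fun x : ℂ => (1 - Complex.exp (-x)) / x) z :=
      (hnum z).div differentiableAt_id hz
    apply h1.congr_of_eventuallyEq
    filter_upwards [isOpen_ne.mem_nhds hz] with x hx
    simp [Ifun, hx]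
  intro z _
  rcases eq_or_ne z 0 with rfl | hz
  · apply Complex.analyticAt_of_differentiable_on_punctured_nhds_of_continuousAt
    · filter_upwards [self_mem_nhdsWithin] with w hw
      exact hdiff w hw
    · -- continuity at 0
      have hd : HasDerivAt (fun z : ℂ => 1 - Complex.exp (-z)) 1 0 := by
        have h1 : HasDerivAt (fun z : ℂ => Complex.exp (-z))
            (Complex.exp (-(0:ℂ)) * (-1)) 0 := hasDerivAt_neg (0:ℂ) |>.cexp
        have h2 := h1.const_sub (1:ℂ)
        rw [show -(Complex.exp (-(0:ℂ)) * (-1)) = 1 by simp] at h2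
        exact h2
      have hslope := hasDerivAt_iff_tendsto_slope.mp hd
      have heq : Ifun =ᶠ[nhdsWithin (0:ℂ) {(0:ℂ)}ᶜ] slope (fun z : ℂ => 1 - Complex.exp (-z)) 0 := by
        filter_upwards [self_mem_nhdsWithin] with x hx
        have hx' : x ≠ 0 := hx
        simp [Ifun, hx', slope, div_eq_inv_mul]
      have h2 : Tendsto Ifun (nhdsWithin (0:ℂ) {(0:ℂ)}ᶜ) (nhds 1) :=
        hslope.congr' heq.symm
      have h3 : Tendsto Ifun (pure (0:ℂ)) (nhds 1) := by
        have : Ifun 0 = 1 := by simp [Ifun]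
        simpa [this] using tendsto_pure_nhds Ifun (0:ℂ)
      have : ContinuousAt Ifun 0 := by
        unfold ContinuousAt
        have h0 : Ifun 0 = 1 := by simp [Ifun]
        rw [h0, ← nhdsNE_sup_pure (0:ℂ)]
        exact Tendsto.sup h2 h3
      exact this
  · have : DifferentiableOn ℂ Ifun {x : ℂ | x ≠ 0} := fun w hw =>
      (hdiff w hw).differentiableWithinAt
    exact this.analyticAt (isOpen_ne.mem_nhds hz)

lemma Ifun_hasDerivAt (z : ℂ) : HasDerivAt Ifun (deriv Ifun z) z :=
  ((Ifun_entire z trivial).differentiableAt).hasDerivAt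

lemma Ifun_deriv_entire : AnalyticOnNhd ℂ (deriv Ifun) Set.univ :=
  Ifun_entire.deriv

lemma Ifun_deriv_hasDerivAt (z : ℂ) : HasDerivAt (deriv Ifun) (deriv (deriv Ifun) z) z :=
  ((Ifun_deriv_entire z trivial).differentiableAt).hasDerivAt

lemma Ifun_continuous : Continuous Ifun := by
  rw [← continuousOn_univ]; exact Ifun_entire.continuousOn

lemma Ifun_deriv_continuous : Continuous (deriv Ifun) := by
  rw [← continuousOn_univ]; exact Ifun_deriv_entire.continuousOn

lemma Ifun_deriv2_continuous : Continuous (deriv (deriv Ifun)) := by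
  rw [← continuousOn_univ]; exact Ifun_deriv_entire.deriv.continuousOn

lemma iteratedDeriv_two : iteratedDeriv 2 Ifun = deriv (deriv Ifun) := by
  rw [show (2:ℕ) = 1 + 1 from rfl, iteratedDeriv_succ, iteratedDeriv_one]

/-- Chain rule for `g (c + t*d)` with `t : ℝ`. -/
lemma hasDerivAt_affine_real {g g' : ℂ → ℂ} (hg : ∀ z, HasDerivAt g (g' z) z)
    (c d : ℂ) (t : ℝ) :
    HasDerivAt (fun t : ℝ => g (c + (t:ℂ) * d)) (d * g' (c + (t:ℂ) * d)) t := by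
  have h1 : HasDerivAt (fun w : ℂ => c + w * d) d (t:ℂ) := by
    simpa using ((hasDerivAt_id ((t:ℂ))).mul_const d).const_add c
  have h2 : HasDerivAt (fun w : ℂ => g (c + w * d)) (g' (c + (t:ℂ) * d) * d) (t:ℂ) :=
    (hg _).comp _ h1
  have := h2.comp_ofReal
  simpa [mul_comm] using this

theorem stmt_10 (a₁ a₂ b₁ b₂ : ℂ) (ha : a₁ ≠ a₂) (hb : b₁ ≠ b₂) :
    (Ifun (a₁ + b₁) * Ifun (a₂ + b₂) - Ifun (a₁ + b₂) * Ifun (a₂ + b₁)) /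
        ((a₂ - a₁) * (b₂ - b₁)) =
      -∫ u in (0:ℝ)..1, ∫ v in (0:ℝ)..1,
          (deriv Ifun ((a₁ + (u:ℂ) * (a₂ - a₁)) + b₁) *
              deriv Ifun (a₂ + (b₁ + (v:ℂ) * (b₂ - b₁))) -
            iteratedDeriv 2 Ifun ((a₁ + (u:ℂ) * (a₂ - a₁)) + (b₁ + (v:ℂ) * (b₂ - b₁))) *
              Ifun (a₂ + b₁)) := by
  have ha' : a₂ - a₁ ≠ 0 := sub_ne_zero.mpr (Ne.symm ha)
  have hb' : b₂ - b₁ ≠ 0 := sub_ne_zero.mpr (Ne.symm hb)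
  set I := Ifun
  set I' := deriv Ifun with hI'
  set I'' := deriv (deriv Ifun) with hI''
  have hiter : iteratedDeriv 2 Ifun = I'' := iteratedDeriv_two
  -- closed form for the inner integral
  have inner_eq : ∀ u : ℝ,
      (∫ v in (0:ℝ)..1,
          (I' ((a₁ + (u:ℂ) * (a₂ - a₁)) + b₁) * I' (a₂ + (b₁ + (v:ℂ) * (b₂ - b₁))) -
            I'' ((a₁ + (u:ℂ) * (a₂ - a₁)) + (b₁ + (v:ℂ) * (b₂ - b₁))) * I (a₂ + b₁))) =
      (I' ((a₁ + (u:ℂ) * (a₂ - a₁)) + b₁) * (I (a₂ + b₂) - I (a₂ + b₁)) -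
        (I' ((a₁ + (u:ℂ) * (a₂ - a₁)) + b₂) - I' ((a₁ + (u:ℂ) * (a₂ - a₁)) + b₁)) *
          I (a₂ + b₁)) / (b₂ - b₁) := by
    intro u
    set A := a₁ + (u:ℂ) * (a₂ - a₁) with hA
    have hderiv : ∀ v : ℝ, HasDerivAt
        (fun v : ℝ => (I' (A + b₁) * I ((a₂ + b₁) + (v:ℂ) * (b₂ - b₁)) -
            I' ((A + b₁) + (v:ℂ) * (b₂ - b₁)) * I (a₂ + b₁)) / (b₂ - b₁))
        (I' (A + b₁) * I' (a₂ + (b₁ + (v:ℂ) * (b₂ - b₁))) -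
            I'' (A + (b₁ + (v:ℂ) * (b₂ - b₁))) * I (a₂ + b₁)) v := by
      intro v
      have h1 := hasDerivAt_affine_real Ifun_hasDerivAt (a₂ + b₁) (b₂ - b₁) v
      have h2 := hasDerivAt_affine_real Ifun_deriv_hasDerivAt (A + b₁) (b₂ - b₁) v
      have h3 := (((h1.const_mul (I' (A + b₁))).sub (h2.mul_const (I (a₂ + b₁)))).div_const
        (b₂ - b₁))
      refine h3.congr_deriv ?_
      have e1 : a₂ + (b₁ + (v:ℂ) * (b₂ - b₁)) = (a₂ + b₁) + (v:ℂ) * (b₂ - b₁) := by ring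
      have e2 : A + (b₁ + (v:ℂ) * (b₂ - b₁)) = (A + b₁) + (v:ℂ) * (b₂ - b₁) := by ring
      rw [e1, e2]
      field_simp
      ring
    rw [intervalIntegral.integral_eq_sub_of_hasDerivAt (fun v _ => hderiv v) ?_]
    · push_cast
      have e1 : (a₂ + b₁) + (1:ℂ) * (b₂ - b₁) = a₂ + b₂ := by ring
      have e2 : (A + b₁) + (1:ℂ) * (b₂ - b₁) = A + b₂ := by ring
      have e3 : (a₂ + b₁) + (0:ℂ) * (b₂ - b₁) = a₂ + b₁ := by ring
      have e4 : (A + b₁) + (0:ℂ) * (b₂ - b₁) = A + b₁ := by ring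
      rw [e1, e2, e3, e4]
      field_simp
      ring
    · apply Continuous.intervalIntegrable
      apply Continuous.sub
      · exact continuous_const.mul (Ifun_deriv_continuous.comp (by continuity))
      · exact (Ifun_deriv2_continuous.comp (by continuity)).mul continuous_const
  -- rewrite double integral and apply FTC in u
  have houter : ∀ u : ℝ, HasDerivAt
      (fun u : ℝ => (I ((a₁ + b₁) + (u:ℂ) * (a₂ - a₁)) * (I (a₂ + b₂) - I (a₂ + b₁)) -
          (I ((a₁ + b₂) + (u:ℂ) * (a₂ - a₁)) - I ((a₁ + b₁) + (u:ℂ) * (a₂ - a₁))) *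
            I (a₂ + b₁)) / ((a₂ - a₁) * (b₂ - b₁)))
      ((I' ((a₁ + (u:ℂ) * (a₂ - a₁)) + b₁) * (I (a₂ + b₂) - I (a₂ + b₁)) -
        (I' ((a₁ + (u:ℂ) * (a₂ - a₁)) + b₂) - I' ((a₁ + (u:ℂ) * (a₂ - a₁)) + b₁)) *
          I (a₂ + b₁)) / (b₂ - b₁)) u := by
    intro u
    have h1 := hasDerivAt_affine_real Ifun_hasDerivAt (a₁ + b₁) (a₂ - a₁) u
    have h2 := hasDerivAt_affine_real Ifun_hasDerivAt (a₁ + b₂) (a₂ - a₁) u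
    have h3 := (((h1.mul_const (I (a₂ + b₂) - I (a₂ + b₁))).sub
      ((h2.sub h1).mul_const (I (a₂ + b₁)))).div_const ((a₂ - a₁) * (b₂ - b₁)))
    refine h3.congr_deriv ?_
    have e1 : (a₁ + (u:ℂ) * (a₂ - a₁)) + b₁ = (a₁ + b₁) + (u:ℂ) * (a₂ - a₁) := by ring
    have e2 : (a₁ + (u:ℂ) * (a₂ - a₁)) + b₂ = (a₁ + b₂) + (u:ℂ) * (a₂ - a₁) := by ring
    rw [e1, e2]
    field_simp
    ring
  have hdouble : (∫ u in (0:ℝ)..1, ∫ v in (0:ℝ)..1,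
          (I' ((a₁ + (u:ℂ) * (a₂ - a₁)) + b₁) * I' (a₂ + (b₁ + (v:ℂ) * (b₂ - b₁))) -
            I'' ((a₁ + (u:ℂ) * (a₂ - a₁)) + (b₁ + (v:ℂ) * (b₂ - b₁))) * I (a₂ + b₁)))
      = -((Ifun (a₁ + b₁) * Ifun (a₂ + b₂) - Ifun (a₁ + b₂) * Ifun (a₂ + b₁)) /
        ((a₂ - a₁) * (b₂ - b₁))) := by
    rw [intervalIntegral.integral_congr (fun u _ => inner_eq u)]
    rw [intervalIntegral.integral_eq_sub_of_hasDerivAt (fun u _ => houter u) ?_]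
    · push_cast
      have e1 : (a₁ + b₁) + (1:ℂ) * (a₂ - a₁) = a₂ + b₁ := by ring
      have e2 : (a₁ + b₂) + (1:ℂ) * (a₂ - a₁) = a₂ + b₂ := by ring
      have e3 : (a₁ + b₁) + (0:ℂ) * (a₂ - a₁) = a₁ + b₁ := by ring
      have e4 : (a₁ + b₂) + (0:ℂ) * (a₂ - a₁) = a₁ + b₂ := by ring
      rw [e1, e2, e3, e4]
      show _ = -((I (a₁ + b₁) * I (a₂ + b₂) - I (a₁ + b₂) * I (a₂ + b₁)) /
        ((a₂ - a₁) * (b₂ - b₁)))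
      field_simp
      ring
    · apply Continuous.intervalIntegrable
      apply Continuous.div_const
      apply Continuous.sub
      · exact (Ifun_deriv_continuous.comp (by continuity)).mul continuous_const
      · exact (((Ifun_deriv_continuous.comp (by continuity)).sub
          (Ifun_deriv_continuous.comp (by continuity))).mul continuous_const)
  rw [hiter] at *
  rw [hdouble]
  ring
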